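/- Minimax characterization of commuting rates: for an ergodic finite Markov chain with Laplacian Δ, bilinear form L(φ,ψ) = φ^⊤Δψ, and distinct states a, b, the commuting rate r_{ab} = 1/T_{ab} satisfies r_{ab} = min over α with α_a=1, α_b=0 of max over pairs (φ,ψ) with φ_a=ψ_a=1, φ_b=ψ_b=0 and φ+ψ=2α of L(φ,ψ). -/

import Mathlib

open Finset


/-- Harmonic functions of an ergodic chain are constant. -/
lemma aux_harmonic_const {n : ℕ} (P : Matrix (Fin n) (Fin n) ℝ)
    (hP0 : ∀ i j, 0 ≤ P i j) (hP1 : ∀ i, ∑ j, P i j = 1)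
    (herg : ∃ k : ℕ, ∀ i j, 0 < (P ^ k) i j)
    (f : Fin n → ℝ) (hf : ∀ i, ∑ j, P i j * f j = f i) (i j : Fin n) :
    f i = f j := by
  obtain ⟨k, hk⟩ := herg
  have hpow1 : ∀ m : ℕ, ∀ i, ∑ j, (P ^ m) i j = 1 := by
    intro m
    induction m with
    | zero => intro i; simp [Matrix.one_apply]
    | succ m ih =>
      intro i
      have : (P ^ (m+1)) = (P ^ m) * P := by rw [pow_succ]
      simp only [this, Matrix.mul_apply]
      rw [Finset.sum_comm]
      calc ∑ l, ∑ j, (P ^ m) i l * P l j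
          = ∑ l, (P ^ m) i l * ∑ j, P l j := by
            simp [Finset.mul_sum]
        _ = 1 := by simp [hP1, ih i]
  have hpowf : ∀ m : ℕ, ∀ i, ∑ j, (P ^ m) i j * f j = f i := by
    intro m
    induction m with
    | zero => intro i; simp [Matrix.one_apply]
    | succ m ih =>
      intro i
      have : (P ^ (m+1)) = P * (P ^ m) := by rw [pow_succ']
      simp only [this, Matrix.mul_apply]
      calc ∑ j, (∑ l, P i l * (P ^ m) l j) * f j
          = ∑ l, P i l * ∑ j, (P ^ m) l j * f j := by
            simp only [Finset.sum_mul, Finset.mul_sum, mul_assoc]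
            exact Finset.sum_comm
        _ = f i := by simp only [ih]; exact hf i
  -- max argument
  obtain ⟨i₀, -, hmax⟩ := Finset.exists_max_image (univ : Finset (Fin n)) f ⟨i, mem_univ i⟩
  have key : ∀ j, f j = f i₀ := by
    intro j
    have hsum : ∑ l, (P ^ k) i₀ l * (f i₀ - f l) = 0 := by
      simp only [mul_sub]
      rw [Finset.sum_sub_distrib]
      rw [hpowf k i₀, ← Finset.sum_mul, hpow1 k i₀, one_mul, sub_self]
    have hnn : ∀ l ∈ univ, 0 ≤ (P ^ k) i₀ l * (f i₀ - f l) := by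
      intro l _
      exact mul_nonneg (hk i₀ l).le (sub_nonneg.mpr (hmax l (mem_univ l)))
    have := (Finset.sum_eq_zero_iff_of_nonneg hnn).mp hsum j (mem_univ j)
    have h2 := mul_eq_zero.mp this
    rcases h2 with h2 | h2
    · exact absurd h2 (ne_of_gt (hk i₀ j))
    · linarith [sub_eq_zero.mp h2]
  rw [key i, key j]

lemma aux_quad {n : ℕ} (P : Matrix (Fin n) (Fin n) ℝ)
    (hP1 : ∀ i, ∑ j, P i j = 1)
    (w : Fin n → ℝ) (hwP : ∀ j, ∑ i, w i * P i j = w j)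
    (f : Fin n → ℝ) :
    2 * (∑ i, ∑ j, f i * (w i * ((if i = j then (1:ℝ) else 0) - P i j)) * f j)
      = ∑ i, ∑ j, w i * P i j * (f i - f j)^2 := by
  have h1 : ∑ i, ∑ j, f i * (w i * ((if i = j then (1:ℝ) else 0) - P i j)) * f j
      = (∑ i, w i * f i ^ 2) - ∑ i, ∑ j, w i * P i j * (f i * f j) := by
    rw [← Finset.sum_sub_distrib]
    congr 1; ext i
    have : ∀ j, f i * (w i * ((if i = j then (1:ℝ) else 0) - P i j)) * f j
        = (if i = j then w i * f i ^ 2 else 0) - w i * P i j * (f i * f j) := by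
      intro j
      by_cases h : i = j
      · subst h; simp; ring
      · simp [h]; ring
    simp only [this]
    rw [Finset.sum_sub_distrib, Finset.sum_ite_eq (univ : Finset (Fin n)) i]
    simp
  have h2 : ∑ i, ∑ j, w i * P i j * (f i)^2 = ∑ i, w i * f i ^ 2 := by
    congr 1; ext i
    have : ∀ j, w i * P i j * f i ^ 2 = P i j * (w i * f i ^ 2) := by intro j; ring
    simp only [this]
    rw [← Finset.sum_mul, hP1 i, one_mul]
  have h3 : ∑ i, ∑ j, w i * P i j * (f j)^2 = ∑ i, w i * f i ^ 2 := by
    rw [Finset.sum_comm]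
    congr 1; ext j
    calc ∑ i, w i * P i j * f j ^ 2 = (∑ i, w i * P i j) * f j ^ 2 := by
          rw [Finset.sum_mul]
      _ = w j * f j ^ 2 := by rw [hwP j]
  have h4 : ∑ i, ∑ j, w i * P i j * (f i - f j)^2
      = (∑ i, ∑ j, w i * P i j * (f i)^2) + (∑ i, ∑ j, w i * P i j * (f j)^2)
        - 2 * ∑ i, ∑ j, w i * P i j * (f i * f j) := by
    simp only [sub_sq]
    rw [Finset.mul_sum, ← Finset.sum_add_distrib, ← Finset.sum_sub_distrib]
    congr 1; ext i
    rw [Finset.mul_sum, ← Finset.sum_add_distrib, ← Finset.sum_sub_distrib]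
    congr 1; ext j
    ring
  rw [h1, h4, h2, h3]; ring

lemma aux_Mnonneg {n : ℕ} (P : Matrix (Fin n) (Fin n) ℝ)
    (hP0 : ∀ i j, 0 ≤ P i j) (hP1 : ∀ i, ∑ j, P i j = 1)
    (M : Fin n → Fin n → ℝ)
    (hMdiag : ∀ b, M b b = 0)
    (hMstep : ∀ a b, a ≠ b → M a b = 1 + ∑ j, P a j * M j b)
    (i c : Fin n) : 0 ≤ M i c := by
  obtain ⟨i₀, -, hmin⟩ := Finset.exists_min_image (univ : Finset (Fin n)) (fun i => M i c)
    ⟨c, mem_univ c⟩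
  have h0 : 0 ≤ M i₀ c := by
    by_cases h : i₀ = c
    · rw [h, hMdiag]
    · exfalso
      have h1 : M i₀ c = 1 + ∑ j, P i₀ j * M j c := hMstep i₀ c h
      have h2 : ∑ j, P i₀ j * M i₀ c ≤ ∑ j, P i₀ j * M j c :=
        Finset.sum_le_sum fun j _ => mul_le_mul_of_nonneg_left (hmin j (mem_univ j)) (hP0 i₀ j)
      rw [← Finset.sum_mul, hP1 i₀, one_mul] at h2
      linarith
  calc 0 ≤ M i₀ c := h0
    _ ≤ M i c := hmin i (mem_univ i)

lemma aux_kac {n : ℕ} (P : Matrix (Fin n) (Fin n) ℝ)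
    (w : Fin n → ℝ) (hw1 : ∑ i, w i = 1)
    (hwP : ∀ j, ∑ i, w i * P i j = w j)
    (M : Fin n → Fin n → ℝ)
    (hMdiag : ∀ b, M b b = 0)
    (hMstep : ∀ a b, a ≠ b → M a b = 1 + ∑ j, P a j * M j b)
    (c : Fin n) : w c * (1 + ∑ j, P c j * M j c) = 1 := by
  have hS : ∑ i, w i * (M i c - ∑ j, P i j * M j c) = 0 := by
    have : ∑ i, w i * (M i c - ∑ j, P i j * M j c)
        = (∑ i, w i * M i c) - ∑ i, ∑ j, w i * P i j * M j c := by
      rw [← Finset.sum_sub_distrib]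
      congr 1; ext i
      rw [mul_sub, Finset.mul_sum]
      congr 1; congr 1; ext j; ring
    rw [this, Finset.sum_comm]
    have : ∀ j, ∑ i, w i * P i j * M j c = w j * M j c := by
      intro j; rw [← Finset.sum_mul, hwP j]
    simp only [this, sub_self]
  have hS2 : ∑ i, w i * (M i c - ∑ j, P i j * M j c)
      = (∑ i, if i = c then (0:ℝ) else w i) - w c * (1 + ∑ j, P c j * M j c) + w c := by
    have : ∀ i, w i * (M i c - ∑ j, P i j * M j c)
        = (if i = c then (0:ℝ) else w i)
          + (if i = c then - w c * (1 + ∑ j, P c j * M j c) + w c else 0) := by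
      intro i
      by_cases h : i = c
      · subst h
        simp [hMdiag]
        ring
      · rw [hMstep i c h]
        simp [h]
    simp only [this]
    rw [Finset.sum_add_distrib, Finset.sum_ite_eq' (univ : Finset (Fin n)) c]
    simp; ring
  have hw' : (∑ i, if i = c then (0:ℝ) else w i) = 1 - w c := by
    have : ∀ i, (if i = c then (0:ℝ) else w i) = w i - (if i = c then w c else 0) := by
      intro i; by_cases h : i = c <;> simp [h]
    simp only [this]
    rw [Finset.sum_sub_distrib, hw1, Finset.sum_ite_eq' (univ : Finset (Fin n)) c]
    simp
  rw [hS2, hw'] at hS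
  linarith

section
variable {n : ℕ} (P : Matrix (Fin n) (Fin n) ℝ)
    (w : Fin n → ℝ)
    (Δ : Matrix (Fin n) (Fin n) ℝ)
    (M : Fin n → Fin n → ℝ)
    (a b : Fin n)

lemma aux_psi
    (hP0 : ∀ i j, 0 ≤ P i j) (hP1 : ∀ i, ∑ j, P i j = 1)
    (hw1 : ∑ i, w i = 1) (hwpos : ∀ i, 0 < w i)
    (hwP : ∀ j, ∑ i, w i * P i j = w j)
    (hΔ : ∀ i j, Δ i j = w i * ((if i = j then (1 : ℝ) else 0) - P i j))
    (hMdiag : ∀ b, M b b = 0)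
    (hMstep : ∀ a b, a ≠ b → M a b = 1 + ∑ j, P a j * M j b)
    (hab : a ≠ b) :
    ∀ i, ∑ j, Δ i j * ((M j b + M b a - M j a) / (M a b + M b a))
      = (1 / (M a b + M b a)) * ((if i = a then (1:ℝ) else 0) - (if i = b then 1 else 0)) := by
  set T := M a b + M b a with hT
  have hMab : M a b = 1 + ∑ j, P a j * M j b := hMstep a b hab
  have hMba : M b a = 1 + ∑ j, P b j * M j a := hMstep b a (Ne.symm hab)
  have hTpos : 0 < T := by
    have h1 : 0 ≤ ∑ j, P a j * M j b :=
      Finset.sum_nonneg fun j _ => mul_nonneg (hP0 a j) (aux_Mnonneg P hP0 hP1 M hMdiag hMstep j b)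
    have h2 : 0 ≤ ∑ j, P b j * M j a :=
      Finset.sum_nonneg fun j _ => mul_nonneg (hP0 b j) (aux_Mnonneg P hP0 hP1 M hMdiag hMstep j a)
    rw [hT, hMab, hMba]; linarith
  have hTne : T ≠ 0 := ne_of_gt hTpos
  intro i
  set ψ : Fin n → ℝ := fun j => (M j b + M b a - M j a) / T with hψ
  have hstep1 : ∑ j, Δ i j * ψ j = w i * (ψ i - ∑ j, P i j * ψ j) := by
    have : ∀ j, Δ i j * ψ j = (if i = j then w i * ψ i else 0) - w i * (P i j * ψ j) := by
      intro j
      rw [hΔ]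
      by_cases h : i = j
      · subst h; simp; ring
      · simp [h]; ring
    simp only [this]
    rw [Finset.sum_sub_distrib, Finset.sum_ite_eq (univ : Finset (Fin n)) i]
    simp [Finset.mul_sum, mul_sub]
  have hsplit : ∑ j, P i j * ψ j
      = ((∑ j, P i j * M j b) + M b a - ∑ j, P i j * M j a) / T := by
    simp only [hψ]
    have e1 : ∀ x, P i x * ((M x b + M b a - M x a)/T)
        = (P i x * M x b + M b a * P i x - P i x * M x a)/T := by intro x; ring
    simp only [e1]
    rw [← Finset.sum_div]
    congr 1
    rw [Finset.sum_sub_distrib, Finset.sum_add_distrib, ← Finset.mul_sum, hP1 i, mul_one]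
  rw [hstep1, hsplit]
  have hkacA := aux_kac P w hw1 hwP M hMdiag hMstep a
  have hkacB := aux_kac P w hw1 hwP M hMdiag hMstep b
  have hwa := (hwpos a).ne'
  have hwb := (hwpos b).ne'
  by_cases hia : i = a
  · rw [hia]
    have hMaa : M a a = 0 := hMdiag a
    have hsum : ∑ j, P a j * M j a = 1 / w a - 1 := by
      have : w a ≠ 0 := (hwpos a).ne'
      field_simp at hkacA
      field_simp
      linarith
    simp only [hψ, hMaa, if_pos rfl, if_true, if_neg hab]
    rw [hMab, hsum]
    have : w a ≠ 0 := (hwpos a).ne'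
    field_simp
    ring
  · by_cases hib : i = b
    · rw [hib]
      have hMbb : M b b = 0 := hMdiag b
      have hsum : ∑ j, P b j * M j b = 1 / w b - 1 := by
        have : w b ≠ 0 := (hwpos b).ne'
        field_simp at hkacB
        field_simp
        linarith
      simp only [hψ, hMbb, if_neg (Ne.symm hab), if_pos rfl, if_true]
      rw [hMba, hsum]
      have : w b ≠ 0 := (hwpos b).ne'
      field_simp
      ring
    · have h1 : M i b = 1 + ∑ j, P i j * M j b := hMstep i b hib
      have h2 : M i a = 1 + ∑ j, P i j * M j a := hMstep i a hia
      simp only [hψ, if_neg hia, if_neg hib]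
      rw [h1, h2]
      field_simp
      ring
end

lemma aux_phi_exists {n : ℕ} (P : Matrix (Fin n) (Fin n) ℝ)
    (hP0 : ∀ i j, 0 ≤ P i j) (hP1 : ∀ i, ∑ j, P i j = 1)
    (herg : ∃ k : ℕ, ∀ i j, 0 < (P ^ k) i j)
    (w : Fin n → ℝ)
    (hw1 : ∑ i, w i = 1) (hwpos : ∀ i, 0 < w i)
    (hwP : ∀ j, ∑ i, w i * P i j = w j)
    (Δ : Matrix (Fin n) (Fin n) ℝ)
    (hΔ : ∀ i j, Δ i j = w i * ((if i = j then (1 : ℝ) else 0) - P i j))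
    (a b : Fin n) (hab : a ≠ b) :
    ∃ x : Fin n → ℝ, ∀ j, ∑ i, x i * Δ i j
      = (if j = a then (1:ℝ) else 0) - (if j = b then 1 else 0) := by
  classical
  set A := Matrix.vecMulLinear Δ with hA
  have hAapp : ∀ (x : Fin n → ℝ) (j), A x j = ∑ i, x i * Δ i j := by
    intro x j
    simp [hA, Matrix.vecMulLinear, Matrix.vecMul, dotProduct]
  -- the sum functional
  set s : (Fin n → ℝ) →ₗ[ℝ] ℝ :=
    { toFun := fun f => ∑ i, f i
      map_add' := by intros; simp [Finset.sum_add_distrib]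
      map_smul' := by intros; simp [Finset.mul_sum] } with hs
  have hsapp : ∀ f : Fin n → ℝ, s f = ∑ i, f i := fun f => rfl
  -- row sums of Δ are 0
  have hrow : ∀ i, ∑ j, Δ i j = 0 := by
    intro i
    have : ∀ j, Δ i j = (if i = j then w i else 0) - w i * P i j := by
      intro j; rw [hΔ]; by_cases h : i = j <;> simp [h] <;> ring
    simp only [this]
    rw [Finset.sum_sub_distrib, Finset.sum_ite_eq (univ : Finset (Fin n)) i, ← Finset.mul_sum,
      hP1 i]
    simp
  -- column sums of Δ are 0
  have hcol : ∀ j, ∑ i, Δ i j = 0 := by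
    intro j
    have : ∀ i, Δ i j = (if i = j then w j else 0) - w i * P i j := by
      intro i
      rw [hΔ]
      by_cases h : i = j
      · subst h; simp; ring
      · simp [h]
    simp only [this]
    rw [Finset.sum_sub_distrib, Finset.sum_ite_eq' (univ : Finset (Fin n)) j, hwP j]
    simp
  -- kernel of A is the constants
  have hker : LinearMap.ker A = Submodule.span ℝ {fun _ => (1:ℝ)} := by
    apply le_antisymm
    · intro x hx
      have hx0 : ∀ j, ∑ i, x i * Δ i j = 0 := by
        intro j
        have := congrFun (LinearMap.mem_ker.mp hx) j
        rw [← hAapp x j]; exact this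
      -- quadratic form vanishes
      have hq : ∑ i, ∑ j, x i * Δ i j * x j = 0 := by
        rw [Finset.sum_comm]
        have : ∀ j, ∑ i, x i * Δ i j * x j = (∑ i, x i * Δ i j) * x j := by
          intro j; rw [Finset.sum_mul]
        simp only [this, hx0, zero_mul, Finset.sum_const_zero]
      have hq2 : ∑ i, ∑ j, w i * P i j * (x i - x j)^2 = 0 := by
        have := aux_quad P hP1 w hwP x
        simp only [← hΔ] at this
        rw [← this, hq, mul_zero]
      -- hence x is harmonic
      have hharm : ∀ i, ∑ j, P i j * x j = x i := by
        intro i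
        have hnn : ∀ p ∈ (univ : Finset (Fin n)) ×ˢ (univ : Finset (Fin n)),
            0 ≤ w p.1 * P p.1 p.2 * (x p.1 - x p.2)^2 := by
          intro p _
          exact mul_nonneg (mul_nonneg (hwpos p.1).le (hP0 p.1 p.2)) (sq_nonneg _)
        have hz : ∀ i j, w i * P i j * (x i - x j)^2 = 0 := by
          rw [← Finset.sum_product'] at hq2
          intro i j
          exact (Finset.sum_eq_zero_iff_of_nonneg hnn).mp hq2 (i, j) (by simp)
        have hterm : ∀ j, P i j * x j = P i j * x i := by
          intro j
          have h := hz i j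
          rcases mul_eq_zero.mp h with h' | h'
          · rcases mul_eq_zero.mp h' with h'' | h''
            · exact absurd h'' (hwpos i).ne'
            · rw [h'']; ring
          · have : x i = x j := by nlinarith [sq_nonneg (x i - x j), pow_eq_zero_iff (n := 2) (two_ne_zero) |>.mp h']
            rw [this]
        rw [Finset.sum_congr rfl (fun j _ => hterm j), ← Finset.sum_mul, hP1 i, one_mul]
      have hconst : ∀ i, x i = x a := fun i =>
        aux_harmonic_const P hP0 hP1 herg x hharm i a
      apply Submodule.mem_span_singleton.mpr
      exact ⟨x a, by ext i; simp [hconst i]⟩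
    · rw [Submodule.span_le]
      intro y hy
      simp only [Set.mem_singleton_iff] at hy
      subst hy
      simp only [SetLike.mem_coe, LinearMap.mem_ker]
      ext j
      rw [hAapp]
      simp only [one_mul]
      exact hcol j
  -- dimension count
  have hone_ne : (fun _ : Fin n => (1:ℝ)) ≠ 0 := by
    intro h
    have := congrFun h a
    simp at this
  have hkerdim : Module.finrank ℝ (LinearMap.ker A) = 1 := by
    rw [hker]
    exact finrank_span_singleton hone_ne
  have hrange_le : LinearMap.range A ≤ LinearMap.ker s := by
    rintro y ⟨x, rfl⟩
    rw [LinearMap.mem_ker, hsapp]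
    have : ∀ j, A x j = ∑ i, x i * Δ i j := fun j => hAapp x j
    calc ∑ j, A x j = ∑ j, ∑ i, x i * Δ i j := by simp only [this]
      _ = ∑ i, x i * ∑ j, Δ i j := by
          rw [Finset.sum_comm]; simp [Finset.mul_sum]
      _ = 0 := by simp [hrow]
  have hsker : Module.finrank ℝ (LinearMap.ker s) + 1 = n := by
    have hsur : LinearMap.range s = ⊤ := by
      rw [LinearMap.range_eq_top]
      intro c
      refine ⟨fun i => if i = a then c else 0, ?_⟩
      rw [hsapp, Finset.sum_ite_eq' (univ : Finset (Fin n)) a]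
      simp
    have := LinearMap.finrank_range_add_finrank_ker s
    rw [hsur] at this
    simp at this
    omega
  have hrange_dim : Module.finrank ℝ (LinearMap.range A) + 1 = n := by
    have := LinearMap.finrank_range_add_finrank_ker A
    rw [hkerdim] at this
    simpa using this
  have hrange_eq : LinearMap.range A = LinearMap.ker s :=
    Submodule.eq_of_le_of_finrank_le hrange_le (by omega)
  -- the target vector has zero sum
  have htarget : (fun j => (if j = a then (1:ℝ) else 0) - (if j = b then 1 else 0))
      ∈ LinearMap.ker s := by
    rw [LinearMap.mem_ker, hsapp, Finset.sum_sub_distrib,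
      Finset.sum_ite_eq' (univ : Finset (Fin n)) a,
      Finset.sum_ite_eq' (univ : Finset (Fin n)) b]
    simp
  rw [← hrange_eq] at htarget
  obtain ⟨x, hx⟩ := htarget
  exact ⟨x, fun j => by rw [← hAapp, hx]⟩

/-- Minimax characterization of the commuting rate: for distinct states
`a ≠ b`, `1 / T a b` is the least value, over `α` with `α a = 1, α b = 0`,
of the greatest value of `L φ ψ` over pairs `(φ, ψ)` with boundary values
`1` at `a`, `0` at `b`, and `φ + ψ = 2 α`. -/
theorem commute_rate_minimax {n : ℕ}
    (P : Matrix (Fin n) (Fin n) ℝ)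
    (hP0 : ∀ i j, 0 ≤ P i j) (hP1 : ∀ i, ∑ j, P i j = 1)
    (herg : ∃ k : ℕ, ∀ i j, 0 < (P ^ k) i j)
    (w : Fin n → ℝ)
    (hw1 : ∑ i, w i = 1) (hwpos : ∀ i, 0 < w i)
    (hwP : ∀ j, ∑ i, w i * P i j = w j)
    (Δ : Matrix (Fin n) (Fin n) ℝ)
    (hΔ : ∀ i j, Δ i j = w i * ((if i = j then (1 : ℝ) else 0) - P i j))
    (L : (Fin n → ℝ) → (Fin n → ℝ) → ℝ)
    (hL : ∀ φ ψ, L φ ψ = ∑ i, ∑ j, φ i * Δ i j * ψ j)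
    (M : Fin n → Fin n → ℝ)
    (hMdiag : ∀ b, M b b = 0)
    (hMstep : ∀ a b, a ≠ b → M a b = 1 + ∑ j, P a j * M j b)
    (T : Fin n → Fin n → ℝ)
    (hT : ∀ a b, T a b = M a b + M b a)
    (a b : Fin n) (hab : a ≠ b) :
    IsLeast
      { v : ℝ | ∃ α : Fin n → ℝ, α a = 1 ∧ α b = 0 ∧
          IsGreatest
            { x : ℝ | ∃ φ ψ : Fin n → ℝ,
                φ a = 1 ∧ φ b = 0 ∧ ψ a = 1 ∧ ψ b = 0 ∧
                φ + ψ = (2 : ℝ) • α ∧ x = L φ ψ } v }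
      (1 / T a b) := by
  classical
  set Tab := M a b + M b a with hTab
  have hTeq : T a b = Tab := hT a b
  set r : ℝ := 1 / Tab with hr
  -- positivity of Tab
  have hTpos : 0 < Tab := by
    have h1 : 0 ≤ ∑ j, P a j * M j b :=
      Finset.sum_nonneg fun j _ => mul_nonneg (hP0 a j) (aux_Mnonneg P hP0 hP1 M hMdiag hMstep j b)
    have h2 : 0 ≤ ∑ j, P b j * M j a :=
      Finset.sum_nonneg fun j _ => mul_nonneg (hP0 b j) (aux_Mnonneg P hP0 hP1 M hMdiag hMstep j a)
    rw [hTab, hMstep a b hab, hMstep b a (Ne.symm hab)]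
    linarith
  have hTne : Tab ≠ 0 := ne_of_gt hTpos
  -- the forward hitting-probability vector ψ̄
  set ψ' : Fin n → ℝ := fun j => (M j b + M b a - M j a) / Tab with hψ'
  have hψa : ψ' a = 1 := by
    simp only [hψ', hMdiag a]
    rw [sub_zero, ← hTab, div_self hTne]
  have hψb : ψ' b = 0 := by
    simp only [hψ', hMdiag b]
    rw [zero_add, sub_self, zero_div]
  have hΔψ : ∀ i, ∑ j, Δ i j * ψ' j
      = r * ((if i = a then (1:ℝ) else 0) - (if i = b then 1 else 0)) :=
    aux_psi P w Δ M a b hP0 hP1 hw1 hwpos hwP hΔ hMdiag hMstep hab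
  -- inner-sum evaluation helpers
  have hsum_indicator : ∀ (f : Fin n → ℝ) (c : ℝ),
      ∑ i, f i * (c * ((if i = a then (1:ℝ) else 0) - (if i = b then 1 else 0)))
        = c * (f a - f b) := by
    intro f c
    have e : ∀ i, f i * (c * ((if i = a then (1:ℝ) else 0) - (if i = b then 1 else 0)))
        = (if i = a then c * f i else 0) - (if i = b then c * f i else 0) := by
      intro i
      by_cases h1 : i = a
      · have h2 : i ≠ b := by rw [h1]; exact hab
        simp [h1, h2, hab]; ring
      · by_cases h2 : i = b
        · simp [h1, h2, Ne.symm hab]; ring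
        · simp [h1, h2]
    simp only [e]
    rw [Finset.sum_sub_distrib, Finset.sum_ite_eq' (univ : Finset (Fin n)) a,
      Finset.sum_ite_eq' (univ : Finset (Fin n)) b]
    simp [mul_sub]
  -- L f ψ' = r * (f a - f b) for every f
  have hLψ : ∀ f : Fin n → ℝ, L f ψ' = r * (f a - f b) := by
    intro f
    rw [hL]
    have e : ∀ i, ∑ j, f i * Δ i j * ψ' j = f i * (r * ((if i = a then (1:ℝ) else 0) - (if i = b then 1 else 0))) := by
      intro i
      rw [← hΔψ i, Finset.mul_sum]
      congr 1; ext j; ring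
    simp only [e]
    exact hsum_indicator f r
  -- the reversed-chain vector φ̄
  obtain ⟨x, hx⟩ := aux_phi_exists P hP0 hP1 herg w hw1 hwpos hwP Δ hΔ a b hab
  -- column sums of Δ vanish
  have hcol : ∀ j, ∑ i, Δ i j = 0 := by
    intro j
    have e : ∀ i, Δ i j = (if i = j then w j else 0) - w i * P i j := by
      intro i
      rw [hΔ]
      by_cases h : i = j
      · subst h; simp; ring
      · simp [h]
    simp only [e]
    rw [Finset.sum_sub_distrib, Finset.sum_ite_eq' (univ : Finset (Fin n)) j, hwP j]
    simp
  -- x a - x b = Tab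
  have hxab : x a - x b = Tab := by
    have h1 : ∑ j, (∑ i, x i * Δ i j) * ψ' j = ψ' a - ψ' b := by
      have e : ∀ j, (∑ i, x i * Δ i j) * ψ' j
          = ψ' j * ((1:ℝ) * ((if j = a then (1:ℝ) else 0) - (if j = b then 1 else 0))) := by
        intro j; rw [hx j]; ring
      simp only [e]
      rw [hsum_indicator ψ' 1]
      ring
    have h2 : ∑ j, (∑ i, x i * Δ i j) * ψ' j = r * (x a - x b) := by
      have e1 : ∀ j, (∑ i, x i * Δ i j) * ψ' j = ∑ i, x i * (Δ i j * ψ' j) := by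
        intro j; rw [Finset.sum_mul]; congr 1; ext i; ring
      simp only [e1]
      rw [Finset.sum_comm]
      have e2 : ∀ i, ∑ j, x i * (Δ i j * ψ' j)
          = x i * (r * ((if i = a then (1:ℝ) else 0) - (if i = b then 1 else 0))) := by
        intro i; rw [← Finset.mul_sum, hΔψ i]
      simp only [e2]
      exact hsum_indicator x r
    rw [h2, hψa, hψb] at h1
    rw [hr] at h1
    field_simp at h1
    linarith
  set φ' : Fin n → ℝ := fun i => (x i - x b) / Tab with hφ'
  have hφa : φ' a = 1 := by
    simp only [hφ']
    rw [hxab, div_self hTne]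
  have hφb : φ' b = 0 := by
    simp only [hφ', sub_self, zero_div]
  -- φ'ᵀ Δ = r (δ_a - δ_b)
  have hφΔ : ∀ j, ∑ i, φ' i * Δ i j
      = r * ((if j = a then (1:ℝ) else 0) - (if j = b then 1 else 0)) := by
    intro j
    have e : ∀ i, φ' i * Δ i j = (x i * Δ i j) / Tab - (x b / Tab) * Δ i j := by
      intro i; simp only [hφ']; ring
    simp only [e]
    rw [Finset.sum_sub_distrib, ← Finset.sum_div, hx j, ← Finset.mul_sum, hcol j, mul_zero,
      sub_zero, hr]
    ring
  -- L φ' f = r * (f a - f b) for every f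
  have hLφ : ∀ f : Fin n → ℝ, L φ' f = r * (f a - f b) := by
    intro f
    rw [hL, Finset.sum_comm]
    have e : ∀ j, ∑ i, φ' i * Δ i j * f j
        = f j * (r * ((if j = a then (1:ℝ) else 0) - (if j = b then 1 else 0))) := by
      intro j
      rw [← hφΔ j, Finset.mul_sum]
      congr 1; ext i; ring
    simp only [e]
    exact hsum_indicator f r
  -- nonnegativity of the quadratic form
  have hQnn : ∀ f : Fin n → ℝ, 0 ≤ ∑ i, ∑ j, f i * Δ i j * f j := by
    intro f
    have h2 := aux_quad P hP1 w hwP f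
    simp only [← hΔ] at h2
    have hnn : 0 ≤ ∑ i, ∑ j, w i * P i j * (f i - f j)^2 :=
      Finset.sum_nonneg fun i _ => Finset.sum_nonneg fun j _ =>
        mul_nonneg (mul_nonneg (hwpos i).le (hP0 i j)) (sq_nonneg _)
    linarith
  rw [hTeq, ← hr]
  constructor
  · -- membership : α = (φ' + ψ')/2 attains the minimum
    refine ⟨fun i => (φ' i + ψ' i) / 2,
      by show (φ' a + ψ' a) / 2 = 1; rw [hφa, hψa]; norm_num,
      by show (φ' b + ψ' b) / 2 = 0; rw [hφb, hψb]; norm_num, ?_⟩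
    constructor
    · -- r is attained by (φ', ψ')
      refine ⟨φ', ψ', hφa, hφb, hψa, hψb, ?_, ?_⟩
      · ext i; simp; ring
      · rw [hLψ φ', hφa, hφb]; ring
    · -- r is an upper bound
      rintro v ⟨φ, ψ, hpa, hpb, hsa, hsb, hps, rfl⟩
      set h : Fin n → ℝ := fun i => φ i - φ' i with hh
      have hha : h a = 0 := by simp [hh, hpa, hφa]
      have hhb : h b = 0 := by simp [hh, hpb, hφb]
      have hψdef : ∀ i, ψ i = ψ' i - h i := by
        intro i
        have := congrFun hps i
        simp at this
        simp [hh]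
        linarith
      have hφdef : ∀ i, φ i = φ' i + h i := by
        intro i; simp [hh]
      have hsplit : L φ ψ = L φ' ψ' - L φ' h + L h ψ' - (∑ i, ∑ j, h i * Δ i j * h j) := by
        simp only [hL]
        have e : ∀ i j, φ i * Δ i j * ψ j
            = (φ' i * Δ i j * ψ' j - φ' i * Δ i j * h j)
              + (h i * Δ i j * ψ' j - h i * Δ i j * h j) := by
          intro i j
          rw [hφdef i, hψdef j]
          ring
        simp only [e]
        simp only [Finset.sum_add_distrib, Finset.sum_sub_distrib]
        ring
      rw [hsplit, hLψ φ', hLφ h, hLψ h, hφa, hφb, hha, hhb]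
      have := hQnn h
      linarith
  · -- lower bound
    rintro v ⟨α, hαa, hαb, hgr⟩
    have hmem : r ∈ { x : ℝ | ∃ φ ψ : Fin n → ℝ,
        φ a = 1 ∧ φ b = 0 ∧ ψ a = 1 ∧ ψ b = 0 ∧
        φ + ψ = (2 : ℝ) • α ∧ x = L φ ψ } := by
      refine ⟨fun i => 2 * α i - ψ' i, ψ', ?_, ?_, hψa, hψb, ?_, ?_⟩
      · show 2 * α a - ψ' a = 1
        rw [hαa, hψa]; norm_num
      · show 2 * α b - ψ' b = 0
        rw [hαb, hψb]; norm_num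
      · ext i; simp
      · rw [hLψ]
        rw [hαa, hαb, hψa, hψb]; ring
    exact hgr.2 hmem
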